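/- arXiv:2605.27594 — 2 statements merged into one kernel-verified Lean document; each statement's English description precedes it below -/
import Mathlib

section
/- Let P(x) = Σ_{|α| ≤ k} c_α H_α(x) be a polynomial in the normalized Hermite basis on ℝ^d, and define for each multi-index β with |β| ≤ k-1 the vector a_β(P) ∈ ℝ^d with i-th coordinate sqrt(β_i + 1)·c_{β + e_i}. Let M(P) := E_{x ~ N(0, I_d)}[∇P(x) ∇P(x)^⊤]. Then M(P) = Σ_{|β| ≤ k-1} a_β(P) a_β(P)^⊤. Consequently, tr(M(P)^(1/2)) equals the nuclear norm of the matrix A(P) whose columns are the vectors a_β(P). -/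
open MeasureTheory ProbabilityTheory

/-- The standard Gaussian measure on `ℝ^d` (as `Fin d → ℝ`). -/
noncomputable def gaussPi (d : ℕ) : Measure (Fin d → ℝ) :=
  Measure.pi fun _ => gaussianReal 0 1

/-- The normalized (probabilists') Hermite polynomial `H_j(t) = He_j(t) / √(j!)`. -/
noncomputable def hermiteNorm (j : ℕ) (t : ℝ) : ℝ :=
  (Polynomial.aeval t (Polynomial.hermite j)) / Real.sqrt (Nat.factorial j)

/-- The normalized multivariate Hermite polynomial `H_α(x) = ∏_i H_{α_i}(x_i)`. -/
noncomputable def hermiteMulti {d : ℕ} (α : Fin d → ℕ) (x : Fin d → ℝ) : ℝ :=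
  ∏ i, hermiteNorm (α i) (x i)

/-- The `i`-th partial derivative of `P : ℝ^d → ℝ`. -/
noncomputable def pgrad {d : ℕ} (P : (Fin d → ℝ) → ℝ) (x : Fin d → ℝ) (i : Fin d) : ℝ :=
  deriv (fun t => P (Function.update x i t)) (x i)

/-- The finite set of multi-indices `α : Fin d → ℕ` with `|α| ≤ k`. -/
noncomputable def multiIdx (d k : ℕ) : Finset (Fin d → ℕ) :=
  ((Finset.univ : Finset (Fin d → Fin (k + 1))).image fun α => fun i => (α i : ℕ)).filter
    fun α => ∑ i, α i ≤ k

/-- The positive semidefinite square root (Mathlib's former `Matrix.PosSemidef.sqrt`). -/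
noncomputable def Matrix.PosSemidef.sqrt {n 𝕜 : Type*} [Fintype n] [DecidableEq n] [RCLike 𝕜]
    [PartialOrder 𝕜] {A : Matrix n n 𝕜} (hA : A.PosSemidef) : Matrix n n 𝕜 :=
  hA.1.eigenvectorUnitary.1 * Matrix.diagonal ((↑) ∘ (Real.sqrt ∘ hA.1.eigenvalues)) *
  (star hA.1.eigenvectorUnitary : Matrix n n 𝕜)

open Polynomial Real Filter

lemma deriv_hermite_succ : ∀ n : ℕ, derivative (hermite (n+1)) = C ((n : ℤ)+1) * hermite n := by
  intro n
  induction n with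
  | zero => simp [hermite_one, hermite_zero]
  | succ n ih =>
    rw [hermite_succ (n+1), derivative_sub, derivative_mul, derivative_X, ih,
      derivative_mul, derivative_C, hermite_succ n]
    push_cast
    simp only [map_add, map_one, map_ofNat]
    ring

noncomputable def Her (n : ℕ) : Polynomial ℝ := (hermite n).map (Int.castRingHom ℝ)

lemma Her_zero : Her 0 = 1 := by simp [Her, hermite_zero]

lemma Her_succ (n : ℕ) : Her (n+1) = X * Her n - derivative (Her n) := by
  simp [Her, hermite_succ, Polynomial.map_sub, Polynomial.map_mul, derivative_map]

lemma Her_derivative (m : ℕ) : derivative (Her m) = C (m : ℝ) * Her (m - 1) := by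
  cases m with
  | zero => simp [Her_zero]
  | succ m =>
    simp only [Her, derivative_map, deriv_hermite_succ m, Polynomial.map_mul, map_C]
    push_cast
    simp

lemma aeval_eq_eval_Her (n : ℕ) (t : ℝ) : (aeval t (hermite n)) = (Her n).eval t := by
  rw [Her, eval_map, aeval_def, eval₂_eq_eval_map, eval_map]
  norm_num

lemma hermiteNorm_eq (n : ℕ) (t : ℝ) :
    hermiteNorm n t = (Her n).eval t / Real.sqrt (Nat.factorial n) := by
  rw [hermiteNorm, aeval_eq_eval_Her]

lemma sqrt_fact_pos (n : ℕ) : 0 < Real.sqrt (Nat.factorial n) :=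
  Real.sqrt_pos.2 (by exact_mod_cast Nat.factorial_pos n)

lemma hasDerivAt_hermiteNorm (n : ℕ) (t : ℝ) :
    HasDerivAt (fun s => hermiteNorm n s) (Real.sqrt n * hermiteNorm (n-1) t) t := by
  have h := ((Polynomial.hasDerivAt (Her n) t).div_const (Real.sqrt (Nat.factorial n)))
  have h2 : HasDerivAt (fun s => hermiteNorm n s)
      (eval t (derivative (Her n)) / Real.sqrt (Nat.factorial n)) t := by
    refine h.congr_of_eventuallyEq (Eventually.of_forall fun s => ?_)
    exact hermiteNorm_eq n s
  convert h2 using 1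
  rw [Her_derivative, eval_mul, eval_C, hermiteNorm_eq]
  cases n with
  | zero => simp
  | succ m =>
    simp only [Nat.add_sub_cancel]
    have hfact : Real.sqrt ((m+1).factorial) = Real.sqrt ((m:ℝ)+1) * Real.sqrt (m.factorial) := by
      rw [← Real.sqrt_mul (by positivity)]
      congr 1
      push_cast [Nat.factorial_succ]
      ring
    have hpos1 : (0:ℝ) < Real.sqrt ((m:ℝ)+1) := Real.sqrt_pos.2 (by positivity)
    have hpos2 : (0:ℝ) < Real.sqrt (m.factorial) := Real.sqrt_pos.2 (by exact_mod_cast Nat.factorial_pos m)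
    have hm1 : ((m:ℝ)+1) = Real.sqrt ((m:ℝ)+1) * Real.sqrt ((m:ℝ)+1) :=
      (Real.mul_self_sqrt (by positivity)).symm
    push_cast
    rw [hfact, hm1]
    field_simp
    rw [Real.sqrt_sq hpos1.le]

lemma gaussianPDFReal_eq (x : ℝ) :
    gaussianPDFReal 0 1 x = (Real.sqrt (2 * Real.pi))⁻¹ * Real.exp (-(x^2)/2) := by
  simp [gaussianPDFReal]

lemma integral_gaussianReal_eq (f : ℝ → ℝ) :
    ∫ x, f x ∂(gaussianReal 0 1) = ∫ x, f x * gaussianPDFReal 0 1 x := by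
  rw [gaussianReal_of_var_ne_zero 0 one_ne_zero]
  have h : (gaussianPDF 0 1) = fun x => ((Real.toNNReal (gaussianPDFReal 0 1 x)) : ENNReal) := rfl
  rw [h, integral_withDensity_eq_integral_smul
    ((measurable_gaussianPDFReal 0 1).real_toNNReal)]
  congr 1
  ext x
  rw [NNReal.smul_def, Real.coe_toNNReal _ (gaussianPDFReal_nonneg 0 1 x), smul_eq_mul, mul_comm]

lemma integrable_gaussianReal_iff (f : ℝ → ℝ) (hf : Measurable f) :
    Integrable f (gaussianReal 0 1) ↔
      Integrable (fun x => f x * gaussianPDFReal 0 1 x) := by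
  rw [gaussianReal_of_var_ne_zero 0 one_ne_zero]
  have h : (gaussianPDF 0 1) = fun x => ((Real.toNNReal (gaussianPDFReal 0 1 x)) : ENNReal) := rfl
  rw [h, integrable_withDensity_iff_integrable_smul
    ((measurable_gaussianPDFReal 0 1).real_toNNReal)]
  constructor <;> intro h2 <;> refine h2.congr (Eventually.of_forall fun x => ?_) <;>
    simp only [NNReal.smul_def, Real.coe_toNNReal _ (gaussianPDFReal_nonneg 0 1 x),
      smul_eq_mul] <;> ring

lemma abs_pow_le_exp (n : ℕ) (x : ℝ) : |x|^n ≤ (n.factorial : ℝ) * Real.exp |x| := by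
  have h1 : |x|^n / (n.factorial : ℝ) ≤ Real.exp |x| := by
    calc |x|^n / (n.factorial : ℝ)
        ≤ ∑ i ∈ Finset.range (n+1), |x|^i / (i.factorial : ℝ) := by
          exact Finset.single_le_sum (f := fun i => |x|^i / (i.factorial : ℝ)) (fun i _ => by positivity) (Finset.self_mem_range_succ n)
      _ ≤ Real.exp |x| := Real.sum_le_exp_of_nonneg (abs_nonneg x) (n+1)
  have h2 : (0:ℝ) < (n.factorial : ℝ) := by exact_mod_cast n.factorial_pos
  calc |x|^n = |x|^n / (n.factorial : ℝ) * n.factorial := by field_simp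
    _ ≤ Real.exp |x| * n.factorial := by gcongr
    _ = (n.factorial : ℝ) * Real.exp |x| := mul_comm _ _

lemma exp_bound_aux (x : ℝ) : Real.exp (|x| - x^2/2) ≤ Real.exp 1 * Real.exp (-(x^2)/4) := by
  rw [← Real.exp_add]
  apply Real.exp_le_exp.2
  nlinarith [sq_nonneg (|x|/2 - 1), sq_abs x]

/-- The main domination bound: `|p(x) e^{-x²/2}| ≤ C_p e^{-x²/4}`. -/
lemma poly_gauss_bound (p : Polynomial ℝ) (x : ℝ) :
    |eval x p * Real.exp (-(x^2)/2)| ≤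
      ((∑ i ∈ Finset.range (p.natDegree + 1), |p.coeff i| * i.factorial) * Real.exp 1)
        * Real.exp (-(x^2)/4) := by
  have h1 : |eval x p| ≤ ∑ i ∈ Finset.range (p.natDegree + 1), |p.coeff i| * |x|^i := by
    rw [eval_eq_sum_range]
    refine (Finset.abs_sum_le_sum_abs _ _).trans (le_of_eq ?_)
    exact Finset.sum_congr rfl fun i _ => by rw [abs_mul, abs_pow]
  have h2 : ∑ i ∈ Finset.range (p.natDegree + 1), |p.coeff i| * |x|^i ≤
      (∑ i ∈ Finset.range (p.natDegree + 1), |p.coeff i| * i.factorial) * Real.exp |x| := by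
    rw [Finset.sum_mul]
    refine Finset.sum_le_sum fun i _ => ?_
    rw [mul_assoc]
    exact mul_le_mul_of_nonneg_left (abs_pow_le_exp i x) (abs_nonneg _)
  rw [abs_mul, abs_of_pos (Real.exp_pos _)]
  calc |eval x p| * Real.exp (-(x^2)/2)
      ≤ ((∑ i ∈ Finset.range (p.natDegree + 1), |p.coeff i| * i.factorial) * Real.exp |x|)
          * Real.exp (-(x^2)/2) := by
        exact mul_le_mul_of_nonneg_right (h1.trans h2) (Real.exp_pos _).le
    _ = (∑ i ∈ Finset.range (p.natDegree + 1), |p.coeff i| * i.factorial)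
          * Real.exp (|x| - x^2/2) := by
        rw [mul_assoc, ← Real.exp_add]; ring_nf
    _ ≤ _ := by
        rw [mul_assoc]
        refine mul_le_mul_of_nonneg_left (exp_bound_aux x) ?_
        positivity

lemma integrable_poly_gauss (p : Polynomial ℝ) :
    Integrable (fun x => eval x p * Real.exp (-(x^2)/2)) := by
  have hi : Integrable (fun x : ℝ => ((∑ i ∈ Finset.range (p.natDegree + 1),
      |p.coeff i| * i.factorial) * Real.exp 1) * Real.exp (-(x^2)/4)) := by
    refine Integrable.const_mul ?_ _
    have := integrable_exp_neg_mul_sq (b := (1:ℝ)/4) (by norm_num)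
    refine this.congr (Eventually.of_forall fun x => ?_)
    ring_nf
  refine hi.mono' ?_ (Eventually.of_forall fun x => poly_gauss_bound p x)
  exact ((p.continuous_aeval.mul (by continuity))).aestronglyMeasurable

lemma tendsto_poly_gauss (p : Polynomial ℝ) (l : Filter ℝ)
    (hl : Tendsto (fun x : ℝ => x^2) l atTop) :
    Tendsto (fun x => eval x p * Real.exp (-(x^2)/2)) l (nhds 0) := by
  have hb : Tendsto (fun x : ℝ => ((∑ i ∈ Finset.range (p.natDegree + 1),
      |p.coeff i| * i.factorial) * Real.exp 1) * Real.exp (-(x^2)/4)) l (nhds 0) := by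
    rw [show (0:ℝ) = ((∑ i ∈ Finset.range (p.natDegree + 1),
      |p.coeff i| * i.factorial) * Real.exp 1) * 0 by ring]
    refine Tendsto.const_mul _ ?_
    refine Real.tendsto_exp_atBot.comp ?_
    have : Tendsto (fun x : ℝ => -(x^2)) l atBot := tendsto_neg_atBot_iff.2 hl
    exact this.atBot_div_const (by norm_num)
  refine squeeze_zero_norm (fun x => ?_) hb
  exact poly_gauss_bound p x

lemma sq_tendsto_atTop : Tendsto (fun x : ℝ => x^2) atTop atTop :=
  tendsto_pow_atTop two_ne_zero

lemma sq_tendsto_atBot : Tendsto (fun x : ℝ => x^2) atBot atTop := by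
  have h := sq_tendsto_atTop.comp tendsto_neg_atBot_atTop
  refine h.congr fun x => ?_
  simp only [Function.comp_apply]
  ring

lemma integrable_poly_pdf (p : Polynomial ℝ) :
    Integrable (fun x => eval x p * gaussianPDFReal 0 1 x) := by
  have h := (integrable_poly_gauss p).const_mul (Real.sqrt (2 * Real.pi))⁻¹
  refine h.congr (Eventually.of_forall fun x => ?_)
  simp only [gaussianPDFReal_eq]; ring

lemma tendsto_poly_pdf (p : Polynomial ℝ) (l : Filter ℝ)
    (hl : Tendsto (fun x : ℝ => x^2) l atTop) :
    Tendsto (fun x => eval x p * gaussianPDFReal 0 1 x) l (nhds 0) := by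
  have h := (tendsto_poly_gauss p l hl).const_mul (Real.sqrt (2 * Real.pi))⁻¹
  rw [mul_zero] at h
  refine h.congr fun x => ?_
  rw [gaussianPDFReal_eq]; ring

lemma hasDerivAt_poly_pdf (p : Polynomial ℝ) (x : ℝ) :
    HasDerivAt (fun y => eval y p * gaussianPDFReal 0 1 y)
      (eval x (derivative p - X * p) * gaussianPDFReal 0 1 x) x := by
  have hexp : HasDerivAt (fun y : ℝ => (Real.sqrt (2 * Real.pi))⁻¹ * Real.exp (-(y^2)/2))
      ((Real.sqrt (2 * Real.pi))⁻¹ * (Real.exp (-(x^2)/2) * (-x))) x := by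
    have h1 : HasDerivAt (fun y : ℝ => -(y^2)/2) (-x) x := by
      have := ((hasDerivAt_pow 2 x).neg).div_const 2
      refine this.congr_deriv ?_
      push_cast
      ring
    exact (h1.exp).const_mul _
  have hp := Polynomial.hasDerivAt p x
  have h := hp.mul hexp
  have heq : (fun y => eval y p * gaussianPDFReal 0 1 y) =
      fun y => eval y p * ((Real.sqrt (2 * Real.pi))⁻¹ * Real.exp (-(y^2)/2)) := by
    funext y; rw [gaussianPDFReal_eq]
  rw [heq]
  refine h.congr_deriv ?_
  rw [gaussianPDFReal_eq, eval_sub, eval_mul, eval_X]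
  ring

lemma stein_pdf (p : Polynomial ℝ) :
    ∫ x, eval x (derivative p) * gaussianPDFReal 0 1 x
      = ∫ x, eval x (X * p) * gaussianPDFReal 0 1 x := by
  set q : Polynomial ℝ := derivative p - X * p with hq
  have hint : Integrable (fun x => eval x q * gaussianPDFReal 0 1 x) := integrable_poly_pdf q
  have hIic : ∫ x in Set.Iic 0, eval x q * gaussianPDFReal 0 1 x
      = eval 0 p * gaussianPDFReal 0 1 0 - 0 :=
    integral_Iic_of_hasDerivAt_of_tendsto' (fun x _ => hasDerivAt_poly_pdf p x)
      hint.integrableOn (tendsto_poly_pdf p atBot sq_tendsto_atBot)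
  have hIoi : ∫ x in Set.Ioi 0, eval x q * gaussianPDFReal 0 1 x
      = 0 - eval 0 p * gaussianPDFReal 0 1 0 :=
    integral_Ioi_of_hasDerivAt_of_tendsto' (fun x _ => hasDerivAt_poly_pdf p x)
      hint.integrableOn (tendsto_poly_pdf p atTop sq_tendsto_atTop)
  have htot : ∫ x, eval x q * gaussianPDFReal 0 1 x = 0 := by
    rw [← intervalIntegral.integral_Iic_add_Ioi (b := (0:ℝ)) hint.integrableOn hint.integrableOn, hIic, hIoi]
    ring
  have hsub : ∫ x, eval x q * gaussianPDFReal 0 1 x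
      = (∫ x, eval x (derivative p) * gaussianPDFReal 0 1 x)
        - ∫ x, eval x (X * p) * gaussianPDFReal 0 1 x := by
    rw [← integral_sub (integrable_poly_pdf (derivative p)) (integrable_poly_pdf (X * p))]
    congr 1; funext x; rw [hq, eval_sub]; ring
  rw [hsub] at htot
  linarith

lemma integrable_polyG (p : Polynomial ℝ) :
    Integrable (fun x => eval x p) (gaussianReal 0 1) :=
  (integrable_gaussianReal_iff _ (by fun_prop)).2 (integrable_poly_pdf p)

lemma steinG (p : Polynomial ℝ) :
    ∫ x, eval x (derivative p) ∂(gaussianReal 0 1)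
      = ∫ x, eval x (X * p) ∂(gaussianReal 0 1) := by
  rw [integral_gaussianReal_eq, integral_gaussianReal_eq]
  exact stein_pdf p

/-- `∫ He_m dγ = δ_{m,0}`. -/
lemma int_Her : ∀ m : ℕ, ∫ x, eval x (Her m) ∂(gaussianReal 0 1) = if m = 0 then 1 else 0 := by
  intro m
  cases m with
  | zero => simp [Her_zero]
  | succ m =>
    have h : ∫ x, eval x (Her (m+1)) ∂(gaussianReal 0 1)
        = (∫ x, eval x (X * Her m) ∂(gaussianReal 0 1))
          - ∫ x, eval x (derivative (Her m)) ∂(gaussianReal 0 1) := by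
      rw [← integral_sub (integrable_polyG _) (integrable_polyG _)]
      simp only [Her_succ, eval_sub, eval_mul, eval_X]
    rw [h, steinG (Her m)]
    simp

noncomputable def gi (m n : ℕ) : ℝ := ∫ x, eval x (Her m * Her n) ∂(gaussianReal 0 1)

lemma gi_rec (m n : ℕ) : gi m (n+1) = m * gi (m-1) n := by
  have e : Her m * Her (n+1) = (X * (Her m * Her n) - derivative (Her m * Her n))
      + C (m:ℝ) * (Her (m-1) * Her n) := by
    rw [Her_succ n, derivative_mul, Her_derivative m]
    ring
  have h1 : gi m (n+1) = (∫ x, eval x (X * (Her m * Her n)) ∂(gaussianReal 0 1))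
      - (∫ x, eval x (derivative (Her m * Her n)) ∂(gaussianReal 0 1))
      + ∫ x, eval x (C (m:ℝ) * (Her (m-1) * Her n)) ∂(gaussianReal 0 1) := by
    have hInt1 := integrable_polyG (X * (Her m * Her n))
    have hInt2 := integrable_polyG (derivative (Her m * Her n))
    have hInt3 := integrable_polyG (C (m:ℝ) * (Her (m-1) * Her n))
    rw [gi]
    rw [show (fun x => eval x (Her m * Her (n+1)))
        = fun x => (eval x (X * (Her m * Her n)) - eval x (derivative (Her m * Her n)))
          + eval x (C (m:ℝ) * (Her (m-1) * Her n)) by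
      funext x; rw [e]; simp only [eval_add, eval_sub]]
    have hsub : Integrable (fun x => eval x (X * (Her m * Her n))
        - eval x (derivative (Her m * Her n))) (gaussianReal 0 1) := hInt1.sub hInt2
    rw [integral_add hsub hInt3, integral_sub hInt1 hInt2]
  rw [h1, steinG (Her m * Her n)]
  have h2 : ∫ x, eval x (C (m:ℝ) * (Her (m-1) * Her n)) ∂(gaussianReal 0 1)
      = m * gi (m-1) n := by
    rw [gi, ← integral_const_mul]
    congr 1; funext x; simp [eval_mul]
  rw [h2]; ring

lemma gi_eq : ∀ n m : ℕ, gi m n = if m = n then (m.factorial : ℝ) else 0 := by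
  intro n
  induction n with
  | zero =>
    intro m
    have : gi m 0 = ∫ x, eval x (Her m) ∂(gaussianReal 0 1) := by
      rw [gi]; congr 1; funext x; simp [Her_zero]
    rw [this, int_Her m]
    cases m <;> simp
  | succ n ih =>
    intro m
    cases m with
    | zero => rw [gi_rec]; simp
    | succ m =>
      rw [gi_rec]
      simp only [Nat.add_sub_cancel]
      rw [ih m]
      by_cases h : m = n
      · subst h
        rw [if_pos rfl, if_pos rfl, Nat.factorial_succ]
        push_cast
        ring
      · simp [h, fun hh => h (Nat.succ_injective hh)]

lemma integrable_hermiteNorm_mul (m n : ℕ) :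
    Integrable (fun t => hermiteNorm m t * hermiteNorm n t) (gaussianReal 0 1) := by
  have h := ((integrable_polyG (Her m * Her n)).const_mul
    ((Real.sqrt (Nat.factorial m))⁻¹ * (Real.sqrt (Nat.factorial n))⁻¹))
  refine h.congr (Eventually.of_forall fun t => ?_)
  simp only [hermiteNorm_eq, eval_mul]
  field_simp

lemma hermiteNorm_orth (m n : ℕ) :
    ∫ t, hermiteNorm m t * hermiteNorm n t ∂(gaussianReal 0 1)
      = if m = n then 1 else 0 := by
  have h : ∫ t, hermiteNorm m t * hermiteNorm n t ∂(gaussianReal 0 1)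
      = ((Real.sqrt (Nat.factorial m))⁻¹ * (Real.sqrt (Nat.factorial n))⁻¹) * gi m n := by
    rw [gi, ← integral_const_mul]
    congr 1
    funext t
    simp only [hermiteNorm_eq, eval_mul]
    field_simp
  rw [h, gi_eq]
  by_cases hmn : m = n
  · subst hmn
    rw [if_pos rfl, if_pos rfl]
    have hf : Real.sqrt (m.factorial) * Real.sqrt (m.factorial) = ((m.factorial : ℕ) : ℝ) :=
      Real.mul_self_sqrt (by positivity)
    have hne : Real.sqrt (m.factorial) ≠ 0 := (sqrt_fact_pos m).ne'
    rw [← hf]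
    field_simp
    rw [Real.sqrt_sq (Real.sqrt_nonneg _)]
  · simp [hmn]

section PiLemmas
variable {d : ℕ}

lemma gauss_pi_prod_integral (f : Fin d → ℝ → ℝ) :
    ∫ x, ∏ i, f i (x i) ∂(gaussPi d) = ∏ i, ∫ t, f i t ∂(gaussianReal 0 1) := by
  haveI hsf : SigmaFinite (gaussianReal 0 1) := inferInstance
  letI : MeasureSpace ℝ := ⟨gaussianReal 0 1⟩
  exact MeasureTheory.integral_fintype_prod_eq_prod (μ := fun _ => gaussianReal 0 1) f

lemma gauss_pi_prod_integrable (f : Fin d → ℝ → ℝ)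
    (hf : ∀ i, Integrable (f i) (gaussianReal 0 1)) :
    Integrable (fun x => ∏ i, f i (x i)) (gaussPi d) := by
  haveI hsf : SigmaFinite (gaussianReal 0 1) := inferInstance
  letI : MeasureSpace ℝ := ⟨gaussianReal 0 1⟩
  exact MeasureTheory.Integrable.fintype_prod hf

lemma hermiteMulti_mul (β γ : Fin d → ℕ) (x : Fin d → ℝ) :
    hermiteMulti β x * hermiteMulti γ x
      = ∏ i, (hermiteNorm (β i) (x i) * hermiteNorm (γ i) (x i)) := by
  rw [hermiteMulti, hermiteMulti, ← Finset.prod_mul_distrib]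

lemma integrable_hermiteMulti_mul (β γ : Fin d → ℕ) :
    Integrable (fun x => hermiteMulti β x * hermiteMulti γ x) (gaussPi d) := by
  have h := gauss_pi_prod_integrable (fun i t => hermiteNorm (β i) t * hermiteNorm (γ i) t)
    (fun i => integrable_hermiteNorm_mul _ _)
  refine h.congr (Eventually.of_forall fun x => ?_)
  exact (hermiteMulti_mul β γ x).symm

lemma hermiteMulti_orth (β γ : Fin d → ℕ) :
    ∫ x, hermiteMulti β x * hermiteMulti γ x ∂(gaussPi d)
      = if β = γ then 1 else 0 := by
  have h : ∫ x, hermiteMulti β x * hermiteMulti γ x ∂(gaussPi d)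
      = ∏ i, ∫ t, hermiteNorm (β i) t * hermiteNorm (γ i) t ∂(gaussianReal 0 1) := by
    rw [← gauss_pi_prod_integral]
    congr 1
    funext x
    rw [hermiteMulti_mul]
  rw [h]
  by_cases hbg : β = γ
  · subst hbg
    simp [hermiteNorm_orth]
  · obtain ⟨i, hi⟩ : ∃ i, β i ≠ γ i := by
      by_contra hc
      push_neg at hc
      exact hbg (funext hc)
    refine Finset.prod_eq_zero (Finset.mem_univ i) ?_ |>.trans ?_
    · rw [hermiteNorm_orth, if_neg hi]
    · rw [if_neg hbg]

section Pgrad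
variable {d : ℕ}

lemma mem_multiIdx {k : ℕ} (α : Fin d → ℕ) : α ∈ multiIdx d k ↔ ∑ i, α i ≤ k := by
  rw [multiIdx, Finset.mem_filter]
  constructor
  · exact fun h => h.2
  · intro h
    refine ⟨Finset.mem_image.2 ⟨fun i => ⟨α i, Nat.lt_succ_of_le (le_trans
      (Finset.single_le_sum (fun _ _ => Nat.zero_le _) (Finset.mem_univ i)) h)⟩,
      Finset.mem_univ _, rfl⟩, h⟩

lemma hermiteMulti_update_idx (α : Fin d → ℕ) (i : Fin d) (m : ℕ) (x : Fin d → ℝ) :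
    hermiteMulti (Function.update α i m) x
      = hermiteNorm m (x i) * ∏ l ∈ Finset.univ.erase i, hermiteNorm (α l) (x l) := by
  rw [hermiteMulti, ← Finset.mul_prod_erase _ _ (Finset.mem_univ i), Function.update_self]
  congr 1
  refine Finset.prod_congr rfl fun l hl => ?_
  rw [Function.update_of_ne (Finset.ne_of_mem_erase hl)]

lemma hermiteMulti_update_x (α : Fin d → ℕ) (x : Fin d → ℝ) (i : Fin d) (t : ℝ) :
    hermiteMulti α (Function.update x i t)
      = hermiteNorm (α i) t * ∏ l ∈ Finset.univ.erase i, hermiteNorm (α l) (x l) := by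
  rw [hermiteMulti, ← Finset.mul_prod_erase _ _ (Finset.mem_univ i), Function.update_self]
  congr 1
  refine Finset.prod_congr rfl fun l hl => ?_
  rw [Function.update_of_ne (Finset.ne_of_mem_erase hl)]

lemma pgrad_eq {k : ℕ} (c : (Fin d → ℕ) → ℝ) (P : (Fin d → ℝ) → ℝ)
    (hP : ∀ x : Fin d → ℝ, P x = ∑ α ∈ multiIdx d k, c α * hermiteMulti α x)
    (x : Fin d → ℝ) (i : Fin d) :
    pgrad P x i = ∑ α ∈ multiIdx d k,
      c α * (Real.sqrt (α i) * hermiteMulti (Function.update α i (α i - 1)) x) := by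
  have hfun : (fun t => P (Function.update x i t)) = fun t => ∑ α ∈ multiIdx d k,
      c α * (hermiteNorm (α i) t * ∏ l ∈ Finset.univ.erase i, hermiteNorm (α l) (x l)) := by
    funext t
    rw [hP]
    refine Finset.sum_congr rfl fun α _ => ?_
    rw [hermiteMulti_update_x]
  have hD : HasDerivAt (fun t => P (Function.update x i t))
      (∑ α ∈ multiIdx d k,
        c α * (Real.sqrt (α i) * hermiteMulti (Function.update α i (α i - 1)) x)) (x i) := by
    rw [hfun]
    refine HasDerivAt.fun_sum fun α _ => ?_
    have h1 := ((hasDerivAt_hermiteNorm (α i) (x i)).mul_const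
      (∏ l ∈ Finset.univ.erase i, hermiteNorm (α l) (x l))).const_mul (c α)
    refine h1.congr_deriv ?_
    rw [hermiteMulti_update_idx]
    ring
  rw [pgrad, hD.deriv]

end Pgrad

section Main
variable {d : ℕ}

lemma sum_update_nat (β : Fin d → ℕ) (i : Fin d) (v : ℕ) :
    ∑ l, Function.update β i v l = v + ∑ l ∈ Finset.univ.erase i, β l := by
  rw [← Finset.add_sum_erase _ _ (Finset.mem_univ i), Function.update_self]
  congr 1
  exact Finset.sum_congr rfl fun l hl =>
    Function.update_of_ne (Finset.ne_of_mem_erase hl) _ _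

lemma sum_erase_eq (β : Fin d → ℕ) (i : Fin d) :
    ∑ l, β l = β i + ∑ l ∈ Finset.univ.erase i, β l :=
  (Finset.add_sum_erase _ _ (Finset.mem_univ i)).symm

lemma upd_restore (g : Fin d → ℕ) (i : Fin d) (h : g i ≠ 0) :
    Function.update (Function.update g i (g i - 1)) i
      (Function.update g i (g i - 1) i + 1) = g := by
  rw [Function.update_self, Function.update_idem]
  have h2 : g i - 1 + 1 = g i := by omega
  rw [h2, Function.update_eq_self]

lemma upd_cancel (β : Fin d → ℕ) (i : Fin d) :
    Function.update (Function.update β i (β i + 1)) i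
      (Function.update β i (β i + 1) i - 1) = β := by
  rw [Function.update_self, Function.update_idem]
  have h2 : β i + 1 - 1 = β i := by omega
  rw [h2, Function.update_eq_self]

lemma upd_succ_inj (β β' : Fin d → ℕ) (i : Fin d)
    (h : Function.update β i (β i + 1) = Function.update β' i (β' i + 1)) : β = β' := by
  funext l
  have hl := congrFun h l
  by_cases hli : l = i
  · subst hli
    rw [Function.update_self, Function.update_self] at hl
    omega
  · rwa [Function.update_of_ne hli, Function.update_of_ne hli] at hl

/-- Nuclear-norm representation of the spectral regularizer: for
`P = Σ_{|α| ≤ k} c_α H_α` and `a_β(P)_i = √(β_i + 1) c_{β + e_i}`, the matrix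
`M(P) = E[∇P ∇Pᵀ]` satisfies `M(P) = Σ_{|β| ≤ k-1} a_β a_βᵀ = A Aᵀ` where `A` has columns
`a_β`, and consequently `tr (M(P)^{1/2}) = tr ((A Aᵀ)^{1/2})`, the nuclear norm of `A`. -/
theorem nuclear_norm_representation {d k : ℕ} (hk : 1 ≤ k)
    (c : (Fin d → ℕ) → ℝ) (P : (Fin d → ℝ) → ℝ)
    (hP : ∀ x : Fin d → ℝ, P x = ∑ α ∈ multiIdx d k, c α * hermiteMulti α x)
    (a : (Fin d → ℕ) → Fin d → ℝ)
    (ha : ∀ (β : Fin d → ℕ) (i : Fin d),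
      a β i = Real.sqrt ((β i : ℝ) + 1) * c (Function.update β i (β i + 1)))
    (M : Matrix (Fin d) (Fin d) ℝ)
    (hMdef : ∀ i j : Fin d, M i j = ∫ x, pgrad P x i * pgrad P x j ∂(gaussPi d))
    (A : Matrix (Fin d) {β // β ∈ multiIdx d (k - 1)} ℝ)
    (hA : ∀ (i : Fin d) (β : {β // β ∈ multiIdx d (k - 1)}), A i β = a β.1 i) :
    (M = ∑ β ∈ multiIdx d (k - 1), Matrix.of (fun i j => a β i * a β j)) ∧
    (∀ (hMps : M.PosSemidef) (hAps : (A * A.transpose).PosSemidef),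
      hMps.sqrt.trace = hAps.sqrt.trace) := by
  have part1 : M = ∑ β ∈ multiIdx d (k - 1), Matrix.of (fun i j => a β i * a β j) := by
    ext i j
    rw [Matrix.sum_apply]
    simp only [Matrix.of_apply]
    set S := multiIdx d k with hS
    set T := multiIdx d (k - 1) with hT
    set F : (Fin d → ℕ) × (Fin d → ℕ) → ℝ := fun p =>
        (c p.1 * c p.2 * Real.sqrt (p.1 i) * Real.sqrt (p.2 j))
          * (if Function.update p.1 i (p.1 i - 1) = Function.update p.2 j (p.2 j - 1)
              then (1:ℝ) else 0) with hF
    have hexp : ∀ x : Fin d → ℝ, pgrad P x i * pgrad P x j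
        = ∑ p ∈ S ×ˢ S, (c p.1 * c p.2 * Real.sqrt (p.1 i) * Real.sqrt (p.2 j))
            * (hermiteMulti (Function.update p.1 i (p.1 i - 1)) x
              * hermiteMulti (Function.update p.2 j (p.2 j - 1)) x) := by
      intro x
      rw [pgrad_eq c P hP x i, pgrad_eq c P hP x j, Finset.sum_mul_sum,
        ← Finset.sum_product']
      refine Finset.sum_congr rfl fun p _ => ?_
      ring
    have hint : ∀ p ∈ S ×ˢ S, Integrable (fun x =>
        (c p.1 * c p.2 * Real.sqrt (p.1 i) * Real.sqrt (p.2 j))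
          * (hermiteMulti (Function.update p.1 i (p.1 i - 1)) x
            * hermiteMulti (Function.update p.2 j (p.2 j - 1)) x)) (gaussPi d) :=
      fun p _ => (integrable_hermiteMulti_mul _ _).const_mul _
    have hMij : M i j = ∑ p ∈ S ×ˢ S, F p := by
      rw [hMdef i j]
      rw [show (fun x => pgrad P x i * pgrad P x j) = fun x => ∑ p ∈ S ×ˢ S,
          (c p.1 * c p.2 * Real.sqrt (p.1 i) * Real.sqrt (p.2 j))
            * (hermiteMulti (Function.update p.1 i (p.1 i - 1)) x
              * hermiteMulti (Function.update p.2 j (p.2 j - 1)) x) from funext hexp]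
      rw [integral_finset_sum _ hint]
      refine Finset.sum_congr rfl fun p _ => ?_
      rw [integral_const_mul, hermiteMulti_orth]
    set e : (Fin d → ℕ) → (Fin d → ℕ) × (Fin d → ℕ) :=
      fun β => (Function.update β i (β i + 1), Function.update β j (β j + 1)) with he
    have hsub : T.image e ⊆ S ×ˢ S := by
      intro p hp
      obtain ⟨β, hβ, rfl⟩ := Finset.mem_image.1 hp
      have hβk : ∑ l, β l ≤ k - 1 := (mem_multiIdx β).1 hβ
      rw [Finset.mem_product]
      refine ⟨?_, ?_⟩
      · rw [mem_multiIdx]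
        show ∑ l, Function.update β i (β i + 1) l ≤ k
        rw [sum_update_nat]
        have := sum_erase_eq β i
        omega
      · rw [mem_multiIdx]
        show ∑ l, Function.update β j (β j + 1) l ≤ k
        rw [sum_update_nat]
        have := sum_erase_eq β j
        omega
    have hzero : ∀ p ∈ S ×ˢ S, p ∉ T.image e → F p = 0 := by
      intro p hpS hpT
      by_contra hne
      have h1 : p.1 i ≠ 0 := by
        intro h0
        apply hne
        rw [hF]
        simp [h0]
      have h2 : p.2 j ≠ 0 := by
        intro h0
        apply hne
        rw [hF]
        simp [h0]
      have hcond : Function.update p.1 i (p.1 i - 1) = Function.update p.2 j (p.2 j - 1) := by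
        by_contra hc
        apply hne
        rw [hF]
        simp only [if_neg hc]
        ring
      apply hpT
      refine Finset.mem_image.2 ⟨Function.update p.1 i (p.1 i - 1), ?_, ?_⟩
      · rw [mem_multiIdx, sum_update_nat]
        have h3 := sum_erase_eq p.1 i
        have h4 : ∑ l, p.1 l ≤ k := (mem_multiIdx p.1).1 (Finset.mem_product.1 hpS).1
        omega
      · rw [he]
        have e1 := upd_restore p.1 i h1
        have e2 : Function.update (Function.update p.1 i (p.1 i - 1)) j
            (Function.update p.1 i (p.1 i - 1) j + 1) = p.2 := by
          rw [hcond]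
          exact upd_restore p.2 j h2
        exact Prod.ext e1 e2
    have hinj : ∀ β ∈ T, ∀ β' ∈ T, e β = e β' → β = β' := by
      intro β _ β' _ hββ'
      exact upd_succ_inj β β' i (congrArg Prod.fst hββ')
    have himg : ∑ p ∈ T.image e, F p = ∑ β ∈ T, F (e β) := Finset.sum_image hinj
    have hval : ∀ β ∈ T, F (e β) = a β i * a β j := by
      intro β _
      rw [hF, he]
      simp only
      rw [if_pos]
      · rw [Function.update_self, Function.update_self, ha, ha]
        push_cast
        ring
      · rw [upd_cancel β i, upd_cancel β j]
    rw [hMij, ← Finset.sum_subset hsub hzero, himg]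
    exact Finset.sum_congr rfl hval
  refine ⟨part1, ?_⟩
  intro hMps hAps
  have hMA : M = A * A.transpose := by
    rw [part1]
    ext i j
    rw [Matrix.sum_apply, Matrix.mul_apply]
    simp only [Matrix.of_apply, Matrix.transpose_apply, hA]
    rw [Finset.univ_eq_attach, ← Finset.sum_attach (multiIdx d (k-1))
      (fun β => a β i * a β j)]
  revert hMps
  rw [hMA]
  intro hMps
  rw [Subsingleton.elim hMps hAps]

end Main
end PiLemmas
end

section
/- Let q be a real polynomial of degree at most k with |q(x)| ≤ M for all |x| ≤ R. If additionally (2/R)^{2k} · E_{x~N(0,1)}[x^{2k}] ≤ (8k/R²)^k, then E_{x ~ N(0,1)}[q(x)² · 1{|x| > R}] ≤ M² · (8k/R²)^k. In particular, if R = α·sqrt(k) with α² ≥ 16, then E_{x ~ N(0,1)}[q(x)²] ≤ M² · (1 + (8/α²)^k) ≤ 2M². -/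
open MeasureTheory ProbabilityTheory

section ChebAux
open Polynomial Real Finset MeasureTheory ProbabilityTheory

lemma natDegree_cheb_le : ∀ n : ℕ, (Chebyshev.T ℝ n).natDegree ≤ n := by
  intro n
  induction n using Nat.twoStepInduction with
  | zero => simp [Chebyshev.T_zero]
  | one => simp [Chebyshev.T_one]
  | more n ih1 ih2 =>
    have h : ((n:ℤ) + 2) = ((n + 2 : ℕ) : ℤ) := by push_cast; ring
    rw [← h, Chebyshev.T_add_two]
    refine (natDegree_sub_le _ _).trans ?_
    have h1 : (2 * X * Chebyshev.T ℝ ((n:ℤ)+1)).natDegree ≤ n + 2 := by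
      refine (natDegree_mul_le).trans ?_
      have : ((n:ℤ)+1) = ((n+1 : ℕ) : ℤ) := by push_cast; ring
      rw [this]
      have := natDegree_mul_le (p := (2:ℝ[X])) (q := X)
      simp only [natDegree_X, natDegree_ofNat] at this ⊢
      omega
    have h2 : (Chebyshev.T ℝ (n:ℤ)).natDegree ≤ n + 2 := ih1.trans (by omega)
    simp [h1, h2]

lemma cheb_grow {t : ℝ} (ht : 1 ≤ t) : ∀ n : ℕ,
    1 ≤ (Chebyshev.T ℝ n).eval t ∧ (Chebyshev.T ℝ n).eval t ≤ (Chebyshev.T ℝ (n+1:ℕ)).eval t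
    ∧ (Chebyshev.T ℝ n).eval t ≤ (2*t)^n ∧ (Chebyshev.T ℝ (n+1:ℕ)).eval t ≤ (2*t)^(n+1) := by
  have ht0 : (0:ℝ) < t := by linarith
  intro n
  induction n with
  | zero => simp [Chebyshev.T_zero, Chebyshev.T_one, ht]; nlinarith
  | succ n ih =>
    obtain ⟨h1, h2, h3, h4⟩ := ih
    have hrec : (Chebyshev.T ℝ (n+2:ℕ)).eval t
        = 2 * t * (Chebyshev.T ℝ (n+1:ℕ)).eval t - (Chebyshev.T ℝ n).eval t := by
      have h : ((n + 2 : ℕ) : ℤ) = (n:ℤ) + 2 := by push_cast; ring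
      have h' : ((n + 1 : ℕ) : ℤ) = (n:ℤ) + 1 := by push_cast; ring
      rw [h, Chebyshev.T_add_two, h']
      simp
    have hone : 1 ≤ (Chebyshev.T ℝ (n+1:ℕ)).eval t := le_trans h1 h2
    refine ⟨hone, ?_, h4, ?_⟩
    · rw [hrec]; nlinarith
    · rw [hrec]
      have : (2*t)^(n+1+1) = 2*t*(2*t)^(n+1) := by ring
      rw [this]; nlinarith

lemma cheb_key (k : ℕ) (hk : 1 ≤ k) (p : ℝ[X]) (hdeg : p.natDegree ≤ k) (M : ℝ)
    (hb : ∀ x : ℝ, |x| ≤ 1 → |p.eval x| ≤ M) {t : ℝ} (ht : 1 ≤ t) :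
    |p.eval t| ≤ M * (2*t)^k := by
  have hM : 0 ≤ M := le_trans (abs_nonneg _) (hb 0 (by norm_num))
  have hkR : (0:ℝ) < k := by exact_mod_cast hk
  set v : ℕ → ℝ := fun i => Real.cos (i * π / k) with hv
  set s : Finset ℕ := Finset.range (k+1) with hs
  have hθmem : ∀ i : ℕ, i ≤ k → ((i:ℝ) * π / k) ∈ Set.Icc 0 π := by
    intro i hi
    constructor
    · positivity
    · rw [div_le_iff₀ hkR]
      have : (i:ℝ) ≤ k := by exact_mod_cast hi
      nlinarith [pi_pos]
  have hθlt : ∀ i j : ℕ, i < j → ((i:ℝ) * π / k) < (j:ℝ) * π / k := by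
    intro i j hij
    have : (i:ℝ) < j := by exact_mod_cast hij
    have := pi_pos
    gcongr
  have hlt : ∀ i j : ℕ, j ≤ k → i < j → v j < v i := by
    intro i j hj hij
    exact Real.strictAntiOn_cos (hθmem i (le_of_lt (lt_of_lt_of_le hij hj)))
      (hθmem j hj) (hθlt i j hij)
  have hinj : Set.InjOn v ↑s := by
    intro i hi j hj hij
    simp only [hs, coe_range, Set.mem_Iio] at hi hj
    by_contra hne
    rcases Nat.lt_or_ge i j with h | h
    · exact absurd hij (ne_of_gt (hlt i j (by omega) h))
    · exact absurd hij.symm (ne_of_gt (hlt j i (by omega) (by omega)))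
  have hv_le : ∀ i : ℕ, |v i| ≤ 1 := fun i => Real.abs_cos_le_one _
  have hcard : #s = k + 1 := card_range _
  -- p equals its interpolation
  have hdegp : p.degree < (#s : ℕ) := by
    rw [hcard]
    calc p.degree ≤ (p.natDegree : WithBot ℕ) := degree_le_natDegree
    _ ≤ (k : WithBot ℕ) := by exact_mod_cast hdeg
    _ < ((k+1 : ℕ) : WithBot ℕ) := by exact_mod_cast Nat.lt_succ_self k
  have hp := Lagrange.eq_interpolate hinj hdegp
  -- T equals its interpolation
  have hdegT : (Chebyshev.T ℝ k).degree < (#s : ℕ) := by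
    rw [hcard]
    calc (Chebyshev.T ℝ k).degree ≤ ((Chebyshev.T ℝ k).natDegree : WithBot ℕ) :=
      degree_le_natDegree
    _ ≤ (k : WithBot ℕ) := by exact_mod_cast natDegree_cheb_le k
    _ < ((k+1 : ℕ) : WithBot ℕ) := by exact_mod_cast Nat.lt_succ_self k
  have hT := Lagrange.eq_interpolate hinj hdegT
  have hTval : ∀ i : ℕ, (Chebyshev.T ℝ k).eval (v i) = (-1)^i := by
    intro i
    have : v i = Real.cos ((i:ℝ) * π / k) := rfl
    rw [this, Chebyshev.T_real_cos]
    have harg : ((k:ℤ):ℝ) * ((i:ℝ) * π / k) = (i:ℝ) * π - 0 := by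
      push_cast; field_simp; ring
    rw [harg, Real.cos_nat_mul_pi_sub]
    simp
  -- basis evaluation
  set B : ℕ → ℝ := fun i => (Lagrange.basis s v i).eval t with hB
  have hBval : ∀ i : ℕ, B i = (∏ j ∈ s.erase i, (v i - v j)⁻¹) * (∏ j ∈ s.erase i, (t - v j)) := by
    intro i
    rw [hB]
    simp only [Lagrange.basis, eval_prod, Lagrange.basisDivisor, eval_mul, eval_C, eval_sub,
      eval_X]
    rw [← Finset.prod_mul_distrib]
  -- sign of basis value
  have hsign : ∀ i ∈ s, |B i| = (-1)^i * B i := by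
    intro i hi
    have hik : i ≤ k := by simpa [hs, Nat.lt_succ_iff] using hi
    have herase : s.erase i = Finset.range i ∪ Finset.Ico (i+1) (k+1) := by
      ext j
      simp only [hs, mem_erase, mem_range, mem_union, mem_Ico]
      omega
    have hdisj : Disjoint (Finset.range i) (Finset.Ico (i+1) (k+1)) := by
      rw [Finset.disjoint_left]
      intro j hj hj'
      simp only [mem_range] at hj
      simp only [mem_Ico] at hj'
      omega
    have hA : ∏ j ∈ Finset.range i, (v i - v j)⁻¹
        = (-1)^i * ∏ j ∈ Finset.range i, (v j - v i)⁻¹ := by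
      have : ∀ j ∈ Finset.range i, (v i - v j)⁻¹ = (-1) * (v j - v i)⁻¹ := by
        intro j hj
        rw [neg_one_mul, ← inv_neg, neg_sub]
      rw [Finset.prod_congr rfl this, Finset.prod_mul_distrib, Finset.prod_const,
        Finset.card_range]
    have hApos : 0 < ∏ j ∈ Finset.range i, (v j - v i)⁻¹ := by
      apply Finset.prod_pos
      intro j hj
      simp only [mem_range] at hj
      have h := hlt j i hik hj
      exact inv_pos.mpr (by linarith)
    have hCpos : 0 < ∏ j ∈ Finset.Ico (i+1) (k+1), (v i - v j)⁻¹ := by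
      apply Finset.prod_pos
      intro j hj
      simp only [mem_Ico] at hj
      have h := hlt i j (by omega) (by omega)
      exact inv_pos.mpr (by linarith)
    have hDnn : 0 ≤ ∏ j ∈ Finset.range i ∪ Finset.Ico (i+1) (k+1), (t - v j) := by
      apply Finset.prod_nonneg
      intro j hj
      have := hv_le j
      have : v j ≤ 1 := le_trans (le_abs_self _) this
      linarith
    have hnn : 0 ≤ (-1:ℝ)^i * B i := by
      rw [hBval i, herase, Finset.prod_union hdisj, hA]
      have h2 : ((-1:ℝ)^i)^2 = 1 := by
        rw [← pow_mul]
        exact Even.neg_one_pow ⟨i, by ring⟩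
      have heq : (-1:ℝ)^i * ((((-1)^i * ∏ j ∈ Finset.range i, (v j - v i)⁻¹)
            * ∏ j ∈ Finset.Ico (i+1) (k+1), (v i - v j)⁻¹) * ∏ j ∈ Finset.range i ∪ Finset.Ico (i+1) (k+1), (t - v j))
          = ((-1:ℝ)^i)^2 * (((∏ j ∈ Finset.range i, (v j - v i)⁻¹)
            * ∏ j ∈ Finset.Ico (i+1) (k+1), (v i - v j)⁻¹) * ∏ j ∈ Finset.range i ∪ Finset.Ico (i+1) (k+1), (t - v j)) := by
        ring
      rw [heq, h2, one_mul]
      exact mul_nonneg (mul_nonneg hApos.le hCpos.le) hDnn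
    have habs : |(-1:ℝ)^i * B i| = |B i| := by
      rw [abs_mul, abs_pow, abs_neg, abs_one, one_pow, one_mul]
    rw [← habs, abs_of_nonneg hnn]
  -- main chain
  have hTsum : (Chebyshev.T ℝ k).eval t = ∑ i ∈ s, (-1:ℝ)^i * B i := by
    conv_lhs => rw [hT]
    rw [Lagrange.interpolate_apply, eval_finset_sum]
    refine Finset.sum_congr rfl fun i hi => ?_
    rw [eval_mul, eval_C, hTval i]
  have hpsum : p.eval t = ∑ i ∈ s, p.eval (v i) * B i := by
    conv_lhs => rw [hp]
    rw [Lagrange.interpolate_apply, eval_finset_sum]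
    refine Finset.sum_congr rfl fun i hi => ?_
    rw [eval_mul, eval_C]
  calc |p.eval t| = |∑ i ∈ s, p.eval (v i) * B i| := by rw [hpsum]
    _ ≤ ∑ i ∈ s, |p.eval (v i) * B i| := abs_sum_le_sum_abs _ _
    _ ≤ ∑ i ∈ s, M * |B i| := by
        refine Finset.sum_le_sum fun i hi => ?_
        rw [abs_mul]
        exact mul_le_mul_of_nonneg_right (hb _ (hv_le i)) (abs_nonneg _)
    _ = M * ∑ i ∈ s, (-1:ℝ)^i * B i := by
        rw [Finset.mul_sum]
        exact Finset.sum_congr rfl fun i hi => by rw [hsign i hi]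
    _ = M * (Chebyshev.T ℝ k).eval t := by rw [hTsum]
    _ ≤ M * (2*t)^k := mul_le_mul_of_nonneg_left ((cheb_grow ht k).2.2.1) hM

lemma cheb_abs (k : ℕ) (hk : 1 ≤ k) (p : ℝ[X]) (hdeg : p.natDegree ≤ k) (M : ℝ)
    (hb : ∀ x : ℝ, |x| ≤ 1 → |p.eval x| ≤ M) {t : ℝ} (ht : 1 ≤ |t|) :
    |p.eval t| ≤ M * (2*|t|)^k := by
  rcases abs_cases t with ⟨h1, h2⟩ | ⟨h1, h2⟩
  · rw [h1]
    exact cheb_key k hk p hdeg M hb (h1 ▸ ht)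
  · set p' : ℝ[X] := p.comp (-X) with hp'
    have hdeg' : p'.natDegree ≤ k := by
      rw [hp', natDegree_comp, natDegree_neg, natDegree_X, mul_one]
      exact hdeg
    have heval : ∀ u : ℝ, p'.eval u = p.eval (-u) := by
      intro u; rw [hp', eval_comp, eval_neg, eval_X]
    have hb' : ∀ u : ℝ, |u| ≤ 1 → |p'.eval u| ≤ M := by
      intro u hu
      rw [heval]
      exact hb _ (by rwa [abs_neg])
    have ht' : 1 ≤ -t := h1 ▸ ht
    have := cheb_key k hk p' hdeg' M hb' ht'
    rw [heval, neg_neg] at this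
    rw [h1]
    exact this

lemma sq_bound (k : ℕ) (hk : 1 ≤ k) (q : ℝ[X]) (hdeg : q.natDegree ≤ k) (R M : ℝ)
    (hR : 0 < R) (hb : ∀ x : ℝ, |x| ≤ R → |q.eval x| ≤ M) {x : ℝ} (hx : R ≤ |x|) :
    (q.eval x)^2 ≤ M^2 * (2/R)^(2*k) * x^(2*k) := by
  have hM : 0 ≤ M := le_trans (abs_nonneg _) (hb 0 (by simpa using hR.le))
  set p : ℝ[X] := q.comp (C R * X) with hp
  have hdeg' : p.natDegree ≤ k := by
    rw [hp, natDegree_comp, natDegree_C_mul_X R hR.ne', mul_one]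
    exact hdeg
  have heval : ∀ u : ℝ, p.eval u = q.eval (R * u) := by
    intro u; rw [hp, eval_comp, eval_mul, eval_C, eval_X]
  have hb' : ∀ u : ℝ, |u| ≤ 1 → |p.eval u| ≤ M := by
    intro u hu
    rw [heval]
    refine hb _ ?_
    rw [abs_mul, abs_of_pos hR]
    calc R * |u| ≤ R * 1 := by gcongr
      _ = R := mul_one R
  have ht : 1 ≤ |x / R| := by
    rw [abs_div, abs_of_pos hR, le_div_iff₀ hR, one_mul]
    exact hx
  have hq : |q.eval x| ≤ M * (2 * |x| / R)^k := by
    have := cheb_abs k hk p hdeg' M hb' ht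
    rw [heval, mul_div_cancel₀ _ hR.ne'] at this
    calc |q.eval x| ≤ M * (2 * |x / R|)^k := this
      _ = M * (2 * |x| / R)^k := by rw [abs_div, abs_of_pos hR]; ring_nf
  calc (q.eval x)^2 = |q.eval x|^2 := (sq_abs _).symm
    _ ≤ (M * (2 * |x| / R)^k)^2 := by
        apply pow_le_pow_left₀ (abs_nonneg _) hq
    _ = M^2 * (2/R)^(2*k) * |x|^(2*k) := by
        have h1 : 2 * |x| / R = 2/R * |x| := by ring
        have h2 : ((2/R*|x|)^k)^2 = (2/R)^(2*k) * |x|^(2*k) := by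
          rw [mul_pow, mul_pow, ← pow_mul, ← pow_mul, mul_comm k 2]
        rw [h1, mul_pow, h2]
        ring
    _ = M^2 * (2/R)^(2*k) * x^(2*k) := by
        rw [← abs_pow, abs_of_nonneg (Even.pow_nonneg (even_two_mul k) x)]

lemma integrable_pow_gauss (n : ℕ) :
    Integrable (fun x : ℝ => x ^ n) (gaussianReal 0 1) := by
  rw [gaussianReal_of_var_ne_zero 0 one_ne_zero,
    integrable_withDensity_iff (measurable_gaussianPDF 0 1)
      (Filter.Eventually.of_forall fun x => ENNReal.ofReal_lt_top)]
  have hpdf : ∀ x : ℝ, (gaussianPDF 0 1 x).toReal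
      = (Real.sqrt (2*π))⁻¹ * Real.exp (-(1/2) * x^2) := by
    intro x
    rw [gaussianPDF, ENNReal.toReal_ofReal (gaussianPDFReal_nonneg _ _ _), gaussianPDFReal]
    simp only [NNReal.coe_one, mul_one, sub_zero]
    rw [show -x^2/(2:ℝ) = -(1/2)*x^2 by ring]
  have base := integrable_rpow_mul_exp_neg_mul_sq (b := (1:ℝ)/2) (by norm_num)
    (s := (n:ℝ)) (lt_of_lt_of_le (by norm_num) (n.cast_nonneg))
  simp_rw [Real.rpow_natCast] at base
  have heq : (fun x : ℝ => x^n * (gaussianPDF 0 1 x).toReal)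
      = fun x : ℝ => (Real.sqrt (2*π))⁻¹ * (x^n * Real.exp (-(1/2) * x^2)) := by
    funext x
    rw [hpdf]
    ring
  rw [heq]
  have : (fun x : ℝ => x ^ n * Real.exp (-(1/2) * x ^ 2))
      = fun x : ℝ => x ^ n * Real.exp (-(1/2) * x ^ 2) := rfl
  exact (base.const_mul _)

lemma integrable_polyeval (p : ℝ[X]) :
    Integrable (fun x : ℝ => p.eval x) (gaussianReal 0 1) := by
  have heq : (fun x : ℝ => p.eval x)
      = fun x : ℝ => ∑ i ∈ Finset.range (p.natDegree + 1), p.coeff i * x ^ i := by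
    funext x
    rw [Polynomial.eval_eq_sum_range]
  rw [heq]
  exact integrable_finset_sum _ fun i _ => (integrable_pow_gauss i).const_mul _

end ChebAux

/-- Gaussian tail bound for polynomials via Chebyshev growth: if `|q| ≤ M` on `[-R, R]` for a
polynomial `q` of degree at most `k`, and `(2/R)^{2k} E[x^{2k}] ≤ (8k/R²)^k`, then the Gaussian
tail integral of `q²` outside `[-R, R]` is at most `M² (8k/R²)^k`; in particular with
`R = α √k`, `α² ≥ 16`, the full Gaussian integral of `q²` is at most
`M² (1 + (8/α²)^k) ≤ 2 M²`. -/
theorem polynomial_gaussian_tail (k : ℕ) (hk : 1 ≤ k) (q : Polynomial ℝ)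
    (hdeg : q.natDegree ≤ k) (R M : ℝ) (hR : 0 < R) (hM : 0 ≤ M)
    (hbound : ∀ x : ℝ, |x| ≤ R → |q.eval x| ≤ M)
    (hmom : (2 / R) ^ (2 * k) * ∫ x, x ^ (2 * k) ∂(gaussianReal 0 1)
      ≤ (8 * k / R ^ 2) ^ k) :
    (∫ x in {x : ℝ | R < |x|}, (q.eval x) ^ 2 ∂(gaussianReal 0 1)
        ≤ M ^ 2 * (8 * k / R ^ 2) ^ k) ∧
    ∀ α : ℝ, R = α * Real.sqrt k → 16 ≤ α ^ 2 →
      (∫ x, (q.eval x) ^ 2 ∂(gaussianReal 0 1) ≤ M ^ 2 * (1 + (8 / α ^ 2) ^ k)) ∧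
      M ^ 2 * (1 + (8 / α ^ 2) ^ k) ≤ 2 * M ^ 2 := by
  set μ := gaussianReal 0 1 with hμ
  set S : Set ℝ := {x : ℝ | R < |x|} with hS
  have hSm : MeasurableSet S := measurableSet_lt measurable_const measurable_abs
  have hq2 : Integrable (fun x : ℝ => (q.eval x) ^ 2) μ := by
    have heq : (fun x : ℝ => (q.eval x) ^ 2) = fun x : ℝ => (q ^ 2).eval x := by
      funext x; rw [Polynomial.eval_pow]
    rw [heq]
    exact integrable_polyeval (q ^ 2)
  have hgpow : Integrable (fun x : ℝ => M^2 * (2/R)^(2*k) * x^(2*k)) μ :=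
    (integrable_pow_gauss (2*k)).const_mul _
  have htail : ∫ x in S, (q.eval x) ^ 2 ∂μ ≤ M ^ 2 * (8 * k / R ^ 2) ^ k := by
    calc ∫ x in S, (q.eval x) ^ 2 ∂μ
        ≤ ∫ x in S, M^2 * (2/R)^(2*k) * x^(2*k) ∂μ := by
          refine setIntegral_mono_on hq2.integrableOn hgpow.integrableOn hSm ?_
          intro x hx
          exact sq_bound k hk q hdeg R M hR hbound (le_of_lt hx)
      _ ≤ ∫ x, M^2 * (2/R)^(2*k) * x^(2*k) ∂μ := by
          refine setIntegral_le_integral hgpow (Filter.Eventually.of_forall fun x => ?_)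
          exact mul_nonneg (by positivity) (Even.pow_nonneg (even_two_mul k) x)
      _ = M^2 * ((2/R)^(2*k) * ∫ x, x^(2*k) ∂μ) := by
          rw [integral_const_mul, mul_assoc]
      _ ≤ M^2 * (8 * k / R ^ 2) ^ k := mul_le_mul_of_nonneg_left hmom (sq_nonneg M)
  refine ⟨htail, fun α hα h16 => ?_⟩
  have hk0 : (0:ℝ) < k := by exact_mod_cast hk
  have hsk : 0 < Real.sqrt k := Real.sqrt_pos.mpr hk0
  have hα0 : 0 < α := by
    by_contra h
    push_neg at h
    nlinarith [hR, hα]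
  have hR2 : R ^ 2 = α ^ 2 * k := by
    rw [hα, mul_pow, Real.sq_sqrt hk0.le]
  have hkey : 8 * (k:ℝ) / R ^ 2 = 8 / α ^ 2 := by
    rw [hR2, mul_comm (α^2) (k:ℝ), mul_comm (8:ℝ) (k:ℝ), mul_div_mul_left _ _ hk0.ne']
  have htail' : ∫ x in S, (q.eval x) ^ 2 ∂μ ≤ M ^ 2 * (8 / α ^ 2) ^ k := by
    rw [← hkey]; exact htail
  have hcompl : ∫ x in Sᶜ, (q.eval x) ^ 2 ∂μ ≤ M ^ 2 := by
    have h1 : ∫ x in Sᶜ, (q.eval x) ^ 2 ∂μ ≤ ∫ _x in Sᶜ, M ^ 2 ∂μ := by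
      refine setIntegral_mono_on hq2.integrableOn (integrable_const _).integrableOn hSm.compl ?_
      intro x hx
      have hxR : |x| ≤ R := not_lt.mp hx
      calc (q.eval x) ^ 2 = |q.eval x| ^ 2 := (sq_abs _).symm
        _ ≤ M ^ 2 := pow_le_pow_left₀ (abs_nonneg _) (hbound x hxR) 2
    have h2 : (∫ _x in Sᶜ, M ^ 2 ∂μ) = (μ Sᶜ).toReal * M ^ 2 := by
      rw [setIntegral_const, smul_eq_mul]; rfl
    have h3 : (μ Sᶜ).toReal ≤ 1 := by
      have := prob_le_one (μ := μ) (s := Sᶜ)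
      calc (μ Sᶜ).toReal ≤ (1 : ENNReal).toReal := ENNReal.toReal_mono (by norm_num) this
        _ = 1 := by norm_num
    calc ∫ x in Sᶜ, (q.eval x) ^ 2 ∂μ ≤ (μ Sᶜ).toReal * M ^ 2 := h1.trans_eq h2
      _ ≤ 1 * M ^ 2 := by
          exact mul_le_mul_of_nonneg_right h3 (sq_nonneg M)
      _ = M ^ 2 := one_mul _
  have hsplit : ∫ x, (q.eval x) ^ 2 ∂μ
      = (∫ x in S, (q.eval x) ^ 2 ∂μ) + ∫ x in Sᶜ, (q.eval x) ^ 2 ∂μ :=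
    (integral_add_compl hSm hq2).symm
  have hfull : ∫ x, (q.eval x) ^ 2 ∂μ ≤ M ^ 2 * (1 + (8 / α ^ 2) ^ k) := by
    rw [hsplit]
    calc (∫ x in S, (q.eval x) ^ 2 ∂μ) + ∫ x in Sᶜ, (q.eval x) ^ 2 ∂μ
        ≤ M ^ 2 * (8 / α ^ 2) ^ k + M ^ 2 := add_le_add htail' hcompl
      _ = M ^ 2 * (1 + (8 / α ^ 2) ^ k) := by ring
  refine ⟨hfull, ?_⟩
  have hle1 : (8 / α ^ 2 : ℝ) ^ k ≤ 1 := by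
    refine pow_le_one₀ (by positivity) ?_
    rw [div_le_one (by nlinarith)]
    linarith
  nlinarith [sq_nonneg M]
end
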